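/- Fix a positive integer d, a nonnegative integer L, and type sequences w, v ∈ {+,−}^k having the same number of '+' entries p and the same number of '−' entries q. Fix d-staircases μ and λ, and vectors a ∈ ℕ^p, b ∈ ℕ^q. Then the number of skew d-semistandard w-oscillating tableaux with inner shape μ, outer shape λ, wt⁺ = a, wt⁻ = b, and minimum cylindric width at most L equals the number of skew d-semistandard v-oscillating tableaux with inner shape μ, outer shape λ, wt⁺ = a, wt⁻ = b, and minimum cylindric width at most L. -/

import Mathlib

/-- `α ≺ β` for `d`-staircases: `β₁ ≥ α₁ ≥ β₂ ≥ α₂ ≥ ⋯ ≥ β_d ≥ α_d` (0-indexed). -/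
def IntInterlace (d : ℕ) (α β : Fin d → ℤ) : Prop :=
  (∀ i, α i ≤ β i) ∧ ∀ i : Fin d, ∀ h : (i : ℕ) + 1 < d, β ⟨(i : ℕ) + 1, h⟩ ≤ α i

/-- `α ≺_{(d,L)} β` for `d`-staircases: additionally `α_d ≥ β₁ - L`. -/
def IntCylInterlace (d L : ℕ) (α β : Fin d → ℤ) : Prop :=
  IntInterlace d α β ∧
    ∀ h : 0 < d, β ⟨0, h⟩ - (L : ℤ) ≤ α ⟨d - 1, Nat.sub_lt h Nat.one_pos⟩

/-- `T` is a skew `d`-semistandard `w`-oscillating tableau with inner shape `μ`, outer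
shape `lam`, and minimum cylindric width at most `L`: a sequence of `d`-staircases with
`λ⁽ⁱ⁻¹⁾ ≺_{(d,L)} λ⁽ⁱ⁾` when `w i = +` (here `true`) and `λ⁽ⁱ⁾ ≺_{(d,L)} λ⁽ⁱ⁻¹⁾` when
`w i = −` (here `false`). -/
def IsSkewCylOsc (d L k : ℕ) (w : Fin k → Bool) (μ lam : Fin d → ℤ)
    (T : Fin (k + 1) → Fin d → ℤ) : Prop :=
  (∀ i, Antitone (T i)) ∧ T 0 = μ ∧ T (Fin.last k) = lam ∧
  ∀ i : Fin k,
    if w i then IntCylInterlace d L (T i.castSucc) (T i.succ)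
    else IntCylInterlace d L (T i.succ) (T i.castSucc)

/-- `T` has `wt⁺ = a`: for each `i`, the size increase across the `i`-th occurrence of
`+` in `w` is `a i`. -/
def HasWtPlus (d k p : ℕ) (w : Fin k → Bool)
    (hp : (Finset.univ.filter fun i : Fin k => w i = true).card = p)
    (T : Fin (k + 1) → Fin d → ℤ) (a : Fin p → ℕ) : Prop :=
  ∀ i : Fin p,
    (∑ j, T (Fin.succ ((Finset.univ.filter fun i : Fin k => w i = true).orderIsoOfFin hp i).1) j) =
    (∑ j, T (Fin.castSucc
        ((Finset.univ.filter fun i : Fin k => w i = true).orderIsoOfFin hp i).1) j) + (a i : ℤ)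

/-- `T` has `wt⁻ = b`: for each `i`, the size decrease across the `i`-th-to-last
occurrence of `−` in `w` is `b i`. -/
def HasWtMinus (d k q : ℕ) (w : Fin k → Bool)
    (hq : (Finset.univ.filter fun i : Fin k => w i = false).card = q)
    (T : Fin (k + 1) → Fin d → ℤ) (b : Fin q → ℕ) : Prop :=
  ∀ i : Fin q,
    (∑ j, T (Fin.castSucc
        ((Finset.univ.filter fun i : Fin k => w i = false).orderIsoOfFin hq i.rev).1) j) =
    (∑ j, T (Fin.succ
        ((Finset.univ.filter fun i : Fin k => w i = false).orderIsoOfFin hq i.rev).1) j) + (b i : ℤ)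

namespace DRSK

/-- value of `finRotate`. -/
lemma rot_val {d : ℕ} (j : Fin d) :
    ((finRotate d j : Fin d) : ℕ) = if (j : ℕ) + 1 < d then (j : ℕ) + 1 else 0 := by
  cases d with
  | zero => exact j.elim0
  | succ n =>
    rw [finRotate_succ_apply, Fin.val_add_one]
    by_cases h : j = Fin.last n
    · have : (j : ℕ) = n := by rw [h]; rfl
      simp [h, this]
    · have hlt : (j : ℕ) < n := by
        have := j.isLt
        rcases Nat.lt_succ_iff_lt_or_eq.1 this with h' | h'
        · exact h'
        · exact absurd (Fin.ext h' : j = Fin.last n) h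
      rw [if_neg h, if_pos (by omega)]

lemma rot_lt {d : ℕ} {j : Fin d} (h : (j : ℕ) + 1 < d) :
    finRotate d j = ⟨(j : ℕ) + 1, h⟩ := by
  apply Fin.ext; rw [rot_val]; simp [h]

lemma rot_last {d : ℕ} (hd : 0 < d) :
    finRotate d ⟨d - 1, Nat.sub_lt hd Nat.one_pos⟩ = ⟨0, hd⟩ := by
  apply Fin.ext; rw [rot_val]; simp; omega

/-- the local growth map. -/
def phiMap (d : ℕ) (α β γ : Fin d → ℤ) : Fin d → ℤ := fun j =>
  max (α (finRotate d j)) (β (finRotate d j)) + min (α j) (β j) - γ (finRotate d j)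

/-- the inverse local growth map. -/
def psiMap (d : ℕ) (α β δ : Fin d → ℤ) : Fin d → ℤ := fun j =>
  max (α j) (β j) + min (α ((finRotate d).symm j)) (β ((finRotate d).symm j))
    - δ ((finRotate d).symm j)

lemma psi_phi (d : ℕ) (α β γ : Fin d → ℤ) : psiMap d α β (phiMap d α β γ) = γ := by
  funext j
  simp only [psiMap, phiMap, Equiv.apply_symm_apply]
  ring

lemma phi_psi (d : ℕ) (α β δ : Fin d → ℤ) : phiMap d α β (psiMap d α β δ) = δ := by
  funext j
  simp only [psiMap, phiMap, Equiv.symm_apply_apply]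
  ring

lemma sum_rot {d : ℕ} (f : Fin d → ℤ) : ∑ j, f (finRotate d j) = ∑ j, f j :=
  Fintype.sum_equiv (finRotate d) _ _ (fun _ => rfl)

lemma sum_phi (d : ℕ) (α β γ : Fin d → ℤ) :
    ∑ j, phiMap d α β γ j = ((∑ j, α j) + ∑ j, β j) - ∑ j, γ j := by
  have h1 : ∑ j, phiMap d α β γ j
      = (∑ j, ((fun i => max (α i) (β i) - γ i) (finRotate d j))) + ∑ j, min (α j) (β j) := by
    rw [← Finset.sum_add_distrib]
    exact Finset.sum_congr rfl fun j _ => by simp only [phiMap]; ring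
  have h2' := sum_rot (d := d) (fun i => max (α i) (β i) - γ i)
  rw [h1, h2']
  have h2 : ((∑ j, (max (α j) (β j) - γ j)) + ∑ j, min (α j) (β j))
      = (∑ j, (max (α j) (β j) - γ j + min (α j) (β j))) := by
    rw [← Finset.sum_add_distrib]
  rw [h2]
  have h3 : ∀ j : Fin d, max (α j) (β j) - γ j + min (α j) (β j) = α j + β j - γ j := by
    intro j
    have := min_add_max (α j) (β j)
    linarith
  rw [Finset.sum_congr rfl fun j _ => h3 j]
  rw [Finset.sum_sub_distrib, Finset.sum_add_distrib]

lemma sum_psi (d : ℕ) (α β δ : Fin d → ℤ) :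
    ∑ j, psiMap d α β δ j = ((∑ j, α j) + ∑ j, β j) - ∑ j, δ j := by
  have := sum_phi d α β (psiMap d α β δ)
  rw [phi_psi] at this
  have h := sum_phi d α β (psiMap d α β δ)
  -- Σ δ = Σα + Σβ - Σ ψ
  rw [phi_psi] at h
  linarith [h]



/-- antitone from adjacent inequalities -/
lemma antitone_of_adj {d : ℕ} {f : Fin d → ℤ}
    (h : ∀ j : Fin d, ∀ hj : (j : ℕ) + 1 < d, f ⟨(j : ℕ) + 1, hj⟩ ≤ f j) : Antitone f := by
  cases d with
  | zero => intro x; exact x.elim0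
  | succ n =>
    rw [Fin.antitone_iff_succ_le]
    intro i
    have hj : ((i.castSucc : Fin (n+1)) : ℕ) + 1 < n + 1 := by
      simp only [Fin.coe_castSucc]; omega
    have := h i.castSucc hj
    have heq : (⟨((i.castSucc : Fin (n+1)) : ℕ) + 1, hj⟩ : Fin (n+1)) = i.succ := by
      apply Fin.ext; simp
    rwa [heq] at this

lemma phi_good {d L : ℕ} {α β γ : Fin d → ℤ}
    (h1 : IntCylInterlace d L α γ) (h2 : IntCylInterlace d L β γ) :
    Antitone (phiMap d α β γ) ∧ IntCylInterlace d L (phiMap d α β γ) α ∧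
      IntCylInterlace d L (phiMap d α β γ) β := by
  set σ := finRotate d with hσ
  have hbox1 : ∀ j, max (α j) (β j) ≤ γ j := fun j => max_le (h1.1.1 j) (h2.1.1 j)
  have hbox2 : ∀ j : Fin d,
      γ (σ j) ≤ min (α j) (β j) + (if (j : ℕ) + 1 < d then 0 else (L : ℤ)) := by
    intro j
    by_cases h : (j : ℕ) + 1 < d
    · rw [if_pos h, hσ, rot_lt h, add_zero]
      exact le_min (h1.1.2 j h) (h2.1.2 j h)
    · rw [if_neg h]
      have hd : 0 < d := j.pos
      have hj : j = ⟨d - 1, Nat.sub_lt hd Nat.one_pos⟩ := by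
        apply Fin.ext; have := j.isLt; simp; omega
      rw [hj, hσ, rot_last hd]
      have ha := h1.2 hd
      have hb := h2.2 hd
      rw [← hj] at ha hb ⊢
      have := le_min (show γ ⟨0, hd⟩ - (L : ℤ) ≤ α j from ha) hb
      omega
  have hle : ∀ j, phiMap d α β γ j ≤ min (α j) (β j) := by
    intro j
    have := hbox1 (σ j)
    simp only [phiMap, ← hσ]
    omega
  have hge : ∀ j : Fin d,
      max (α (σ j)) (β (σ j)) - (if (j : ℕ) + 1 < d then 0 else (L : ℤ)) ≤ phiMap d α β γ j := by
    intro j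
    have := hbox2 j
    simp only [phiMap, ← hσ]
    omega
  have hanti : Antitone (phiMap d α β γ) := by
    apply antitone_of_adj
    intro j hj
    have h1' := hle ⟨(j : ℕ) + 1, hj⟩
    have h2' := hge j
    rw [if_pos hj, hσ, rot_lt hj, sub_zero] at h2'
    have : min (α ⟨(j:ℕ)+1, hj⟩) (β ⟨(j:ℕ)+1, hj⟩) ≤ max (α ⟨(j:ℕ)+1, hj⟩) (β ⟨(j:ℕ)+1, hj⟩) :=
      min_le_max
    omega
  refine ⟨hanti, ⟨⟨fun j => (hle j).trans (min_le_left _ _), fun j hj => ?_⟩, fun hd => ?_⟩,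
    ⟨⟨fun j => (hle j).trans (min_le_right _ _), fun j hj => ?_⟩, fun hd => ?_⟩⟩
  · have := hge j
    rw [if_pos hj, hσ, rot_lt hj, sub_zero] at this
    exact le_trans (le_max_left _ _) this
  · have := hge ⟨d - 1, Nat.sub_lt hd Nat.one_pos⟩
    rw [if_neg (by simp; omega), hσ, rot_last hd] at this
    have h3 : α ⟨0, hd⟩ - (L : ℤ) ≤ max (α ⟨0, hd⟩) (β ⟨0, hd⟩) - (L : ℤ) := by
      have := le_max_left (α ⟨0, hd⟩) (β ⟨0, hd⟩); omega
    exact h3.trans this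
  · have := hge j
    rw [if_pos hj, hσ, rot_lt hj, sub_zero] at this
    exact le_trans (le_max_right _ _) this
  · have := hge ⟨d - 1, Nat.sub_lt hd Nat.one_pos⟩
    rw [if_neg (by simp; omega), hσ, rot_last hd] at this
    have h3 : β ⟨0, hd⟩ - (L : ℤ) ≤ max (α ⟨0, hd⟩) (β ⟨0, hd⟩) - (L : ℤ) := by
      have := le_max_right (α ⟨0, hd⟩) (β ⟨0, hd⟩); omega
    exact h3.trans this

lemma psi_good {d L : ℕ} {α β δ : Fin d → ℤ}
    (h1 : IntCylInterlace d L δ α) (h2 : IntCylInterlace d L δ β) :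
    Antitone (psiMap d α β δ) ∧ IntCylInterlace d L α (psiMap d α β δ) ∧
      IntCylInterlace d L β (psiMap d α β δ) := by
  set σ := finRotate d with hσ
  have hbox1 : ∀ j, δ j ≤ min (α j) (β j) := fun j => le_min (h1.1.1 j) (h2.1.1 j)
  have hbox2 : ∀ j : Fin d,
      max (α (σ j)) (β (σ j)) - (if (j : ℕ) + 1 < d then 0 else (L : ℤ)) ≤ δ j := by
    intro j
    by_cases h : (j : ℕ) + 1 < d
    · rw [if_pos h, hσ, rot_lt h, sub_zero]
      exact max_le (h1.1.2 j h) (h2.1.2 j h)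
    · rw [if_neg h]
      have hd : 0 < d := j.pos
      have hj : j = ⟨d - 1, Nat.sub_lt hd Nat.one_pos⟩ := by
        apply Fin.ext; have := j.isLt; simp; omega
      rw [hj, hσ, rot_last hd]
      have ha := h1.2 hd
      have hb := h2.2 hd
      rw [← hj] at ha hb ⊢
      have := max_le (show α ⟨0, hd⟩ ≤ δ j + (L : ℤ) by omega)
        (show β ⟨0, hd⟩ ≤ δ j + (L : ℤ) by omega)
      omega
  have hval : ∀ i : Fin d, psiMap d α β δ (σ i)
      = max (α (σ i)) (β (σ i)) + min (α i) (β i) - δ i := by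
    intro i
    simp only [psiMap, ← hσ, Equiv.symm_apply_apply]
  have hge' : ∀ i, max (α (σ i)) (β (σ i)) ≤ psiMap d α β δ (σ i) := by
    intro i; rw [hval]; have := hbox1 i; omega
  have hge : ∀ j, max (α j) (β j) ≤ psiMap d α β δ j := by
    intro j
    have := hge' (σ.symm j)
    rwa [Equiv.apply_symm_apply] at this
  have hle : ∀ i : Fin d, psiMap d α β δ (σ i)
      ≤ min (α i) (β i) + (if (i : ℕ) + 1 < d then 0 else (L : ℤ)) := by
    intro i; rw [hval]; have := hbox2 i; omega
  have hanti : Antitone (psiMap d α β δ) := by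
    apply antitone_of_adj
    intro j hj
    have h1' := hle j
    rw [if_pos hj, hσ, rot_lt hj, add_zero] at h1'
    have h2' := hge j
    have : min (α j) (β j) ≤ max (α j) (β j) := min_le_max
    omega
  refine ⟨hanti, ⟨⟨fun j => le_trans (le_max_left _ _) (hge j), fun j hj => ?_⟩, fun hd => ?_⟩,
    ⟨⟨fun j => le_trans (le_max_right _ _) (hge j), fun j hj => ?_⟩, fun hd => ?_⟩⟩
  · have := hle j
    rw [if_pos hj, hσ, rot_lt hj, add_zero] at this
    exact this.trans (min_le_left _ _)
  · have := hle ⟨d - 1, Nat.sub_lt hd Nat.one_pos⟩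
    rw [if_neg (by simp; omega), hσ, rot_last hd] at this
    have h3 := min_le_left (α ⟨d - 1, Nat.sub_lt hd Nat.one_pos⟩) (β ⟨d - 1, Nat.sub_lt hd Nat.one_pos⟩)
    omega
  · have := hle j
    rw [if_pos hj, hσ, rot_lt hj, add_zero] at this
    exact this.trans (min_le_right _ _)
  · have := hle ⟨d - 1, Nat.sub_lt hd Nat.one_pos⟩
    rw [if_neg (by simp; omega), hσ, rot_last hd] at this
    have h3 := min_le_right (α ⟨d - 1, Nat.sub_lt hd Nat.one_pos⟩) (β ⟨d - 1, Nat.sub_lt hd Nat.one_pos⟩)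
    omega

def PhiT (d k i : ℕ) (hik : i + 1 < k) (T : Fin (k+1) → Fin d → ℤ) : Fin (k+1) → Fin d → ℤ :=
  Function.update T ⟨i+1, by omega⟩
    (phiMap d (T ⟨i, by omega⟩) (T ⟨i+2, by omega⟩) (T ⟨i+1, by omega⟩))

def PsiT (d k i : ℕ) (hik : i + 1 < k) (T : Fin (k+1) → Fin d → ℤ) : Fin (k+1) → Fin d → ℤ :=
  Function.update T ⟨i+1, by omega⟩
    (psiMap d (T ⟨i, by omega⟩) (T ⟨i+2, by omega⟩) (T ⟨i+1, by omega⟩))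

lemma PsiT_PhiT (d k i : ℕ) (hik : i + 1 < k) (T : Fin (k+1) → Fin d → ℤ) :
    PsiT d k i hik (PhiT d k i hik T) = T := by
  unfold PsiT PhiT
  rw [Function.update_of_ne (Fin.ne_of_val_ne (by omega : (i : ℕ) ≠ i + 1)),
      Function.update_of_ne (Fin.ne_of_val_ne (by omega : (i + 2 : ℕ) ≠ i + 1)),
      Function.update_self, psi_phi, Function.update_idem, Function.update_eq_self]

lemma PhiT_PsiT (d k i : ℕ) (hik : i + 1 < k) (T : Fin (k+1) → Fin d → ℤ) :
    PhiT d k i hik (PsiT d k i hik T) = T := by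
  unfold PsiT PhiT
  rw [Function.update_of_ne (Fin.ne_of_val_ne (by omega : (i : ℕ) ≠ i + 1)),
      Function.update_of_ne (Fin.ne_of_val_ne (by omega : (i + 2 : ℕ) ≠ i + 1)),
      Function.update_self, phi_psi, Function.update_idem, Function.update_eq_self]

section Swap

variable {d L k : ℕ} {w : Fin k → Bool} {μ lam : Fin d → ℤ} {i : ℕ}

lemma osc_forward (hik : i + 1 < k)
    (hwi : w ⟨i, by omega⟩ = true) (hwi1 : w ⟨i+1, hik⟩ = false)
    (v : Fin k → Bool) (hv : ∀ j, v j = w (Equiv.swap ⟨i, by omega⟩ ⟨i+1, hik⟩ j))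
    (T : Fin (k+1) → Fin d → ℤ) (hT : IsSkewCylOsc d L k w μ lam T) :
    IsSkewCylOsc d L k v μ lam (PhiT d k i hik T) := by
  have hveq : v = fun j => w (Equiv.swap ⟨i, by omega⟩ ⟨i+1, hik⟩ j) := funext hv
  subst hveq
  obtain ⟨hanti, h0, hlast, hstep⟩ := hT
  have ha : IntCylInterlace d L (T ⟨i, by omega⟩) (T ⟨i+1, by omega⟩) := by
    have := hstep ⟨i, by omega⟩
    rwa [hwi, if_pos rfl] at this
  have hb : IntCylInterlace d L (T ⟨i+2, by omega⟩) (T ⟨i+1, by omega⟩) := by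
    have := hstep ⟨i+1, hik⟩
    rwa [hwi1, if_neg (by simp)] at this
  have hphi := phi_good (L := L) ha hb
  have hupd : PhiT d k i hik T ⟨i+1, by omega⟩
      = phiMap d (T ⟨i, by omega⟩) (T ⟨i+2, by omega⟩) (T ⟨i+1, by omega⟩) :=
    Function.update_self _ _ _
  have hne : ∀ x : Fin (k+1), (x : ℕ) ≠ i + 1 → PhiT d k i hik T x = T x := fun x hx =>
    Function.update_of_ne (Fin.ne_of_val_ne hx) _ _
  refine ⟨?_, ?_, ?_, ?_⟩
  · intro x
    by_cases hx : (x : ℕ) = i + 1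
    · have : x = ⟨i+1, by omega⟩ := Fin.ext hx
      rw [this, hupd]
      exact hphi.1
    · rw [hne x hx]; exact hanti x
  · rw [hne 0 (by simp)]; exact h0
  · rw [hne (Fin.last k) (by simp; omega)]; exact hlast
  · intro jj
    by_cases hj0 : jj = ⟨i, by omega⟩
    · subst hj0
      simp only [Equiv.swap_apply_left]
      rw [hwi1, if_neg (by simp)]
      have e1 : PhiT d k i hik T (Fin.succ ⟨i, by omega⟩)
          = phiMap d (T ⟨i, by omega⟩) (T ⟨i+2, by omega⟩) (T ⟨i+1, by omega⟩) := hupd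
      have e2 : PhiT d k i hik T (Fin.castSucc ⟨i, by omega⟩) = T ⟨i, by omega⟩ :=
        hne _ (by simp only [Fin.coe_castSucc]; omega)
      rw [e1, e2]
      exact hphi.2.1
    by_cases hj1 : jj = ⟨i+1, hik⟩
    · subst hj1
      simp only [Equiv.swap_apply_right]
      rw [hwi, if_pos rfl]
      have e1 : PhiT d k i hik T (Fin.castSucc ⟨i+1, hik⟩)
          = phiMap d (T ⟨i, by omega⟩) (T ⟨i+2, by omega⟩) (T ⟨i+1, by omega⟩) := hupd
      have e2 : PhiT d k i hik T (Fin.succ ⟨i+1, hik⟩) = T ⟨i+2, by omega⟩ :=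
        hne _ (by simp only [Fin.val_succ]; omega)
      rw [e1, e2]
      exact hphi.2.2
    · simp only [Equiv.swap_apply_of_ne_of_ne hj0 hj1]
      have e1 : PhiT d k i hik T (Fin.castSucc jj) = T (Fin.castSucc jj) :=
        hne _ (by simp [Fin.ext_iff] at hj1 ⊢; omega)
      have e2 : PhiT d k i hik T (Fin.succ jj) = T (Fin.succ jj) :=
        hne _ (by simp [Fin.ext_iff] at hj0 ⊢; omega)
      rw [e1, e2]
      exact hstep jj


lemma osc_backward (hik : i + 1 < k)
    (hwi : w ⟨i, by omega⟩ = true) (hwi1 : w ⟨i+1, hik⟩ = false)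
    (v : Fin k → Bool) (hv : ∀ j, v j = w (Equiv.swap ⟨i, by omega⟩ ⟨i+1, hik⟩ j))
    (T : Fin (k+1) → Fin d → ℤ)
    (hT : IsSkewCylOsc d L k v μ lam T) :
    IsSkewCylOsc d L k w μ lam (PsiT d k i hik T) := by
  have hveq : v = fun j => w (Equiv.swap ⟨i, by omega⟩ ⟨i+1, hik⟩ j) := funext hv
  subst hveq
  obtain ⟨hanti, h0, hlast, hstep⟩ := hT
  have hvi : w (Equiv.swap (⟨i, by omega⟩ : Fin k) ⟨i+1, hik⟩ ⟨i, by omega⟩) = false := by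
    rw [Equiv.swap_apply_left]; exact hwi1
  have hvi1 : w (Equiv.swap (⟨i, by omega⟩ : Fin k) ⟨i+1, hik⟩ ⟨i+1, hik⟩) = true := by
    rw [Equiv.swap_apply_right]; exact hwi
  have ha : IntCylInterlace d L (T ⟨i+1, by omega⟩) (T ⟨i, by omega⟩) := by
    have := hstep ⟨i, by omega⟩
    simp only at this
    rw [if_neg (by rw [hvi]; simp)] at this
    exact this
  have hb : IntCylInterlace d L (T ⟨i+1, by omega⟩) (T ⟨i+2, by omega⟩) := by
    have := hstep ⟨i+1, hik⟩
    simp only at this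
    rw [if_pos hvi1] at this
    exact this
  have hpsi := psi_good (L := L) ha hb
  have hupd : PsiT d k i hik T ⟨i+1, by omega⟩
      = psiMap d (T ⟨i, by omega⟩) (T ⟨i+2, by omega⟩) (T ⟨i+1, by omega⟩) :=
    Function.update_self _ _ _
  have hne : ∀ x : Fin (k+1), (x : ℕ) ≠ i + 1 → PsiT d k i hik T x = T x := fun x hx =>
    Function.update_of_ne (Fin.ne_of_val_ne hx) _ _
  refine ⟨?_, ?_, ?_, ?_⟩
  · intro x
    by_cases hx : (x : ℕ) = i + 1
    · have : x = ⟨i+1, by omega⟩ := Fin.ext hx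
      rw [this, hupd]
      exact hpsi.1
    · rw [hne x hx]; exact hanti x
  · rw [hne 0 (by simp)]; exact h0
  · rw [hne (Fin.last k) (by simp; omega)]; exact hlast
  · intro jj
    by_cases hj0 : jj = ⟨i, by omega⟩
    · subst hj0
      rw [hwi, if_pos rfl]
      have e1 : PsiT d k i hik T (Fin.succ ⟨i, by omega⟩)
          = psiMap d (T ⟨i, by omega⟩) (T ⟨i+2, by omega⟩) (T ⟨i+1, by omega⟩) := hupd
      have e2 : PsiT d k i hik T (Fin.castSucc ⟨i, by omega⟩) = T ⟨i, by omega⟩ :=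
        hne _ (by simp only [Fin.coe_castSucc]; omega)
      rw [e1, e2]
      exact hpsi.2.1
    by_cases hj1 : jj = ⟨i+1, hik⟩
    · subst hj1
      rw [hwi1, if_neg (by simp)]
      have e1 : PsiT d k i hik T (Fin.castSucc ⟨i+1, hik⟩)
          = psiMap d (T ⟨i, by omega⟩) (T ⟨i+2, by omega⟩) (T ⟨i+1, by omega⟩) := hupd
      have e2 : PsiT d k i hik T (Fin.succ ⟨i+1, hik⟩) = T ⟨i+2, by omega⟩ :=
        hne _ (by simp only [Fin.val_succ]; omega)
      rw [e1, e2]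
      exact hpsi.2.2
    · have e1 : PsiT d k i hik T (Fin.castSucc jj) = T (Fin.castSucc jj) :=
        hne _ (by simp [Fin.ext_iff] at hj1 ⊢; omega)
      have e2 : PsiT d k i hik T (Fin.succ jj) = T (Fin.succ jj) :=
        hne _ (by simp [Fin.ext_iff] at hj0 ⊢; omega)
      rw [e1, e2]
      have := hstep jj
      simp only [Equiv.swap_apply_of_ne_of_ne hj0 hj1] at this
      exact this


lemma emb_comp {n : ℕ} {S S' : Finset (Fin k)} (hS : S.card = n) (hS' : S'.card = n)
    (f : Equiv.Perm (Fin k)) (hmem : ∀ x ∈ S, f x ∈ S')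
    (hmono : ∀ x ∈ S, ∀ y ∈ S, x < y → f x < f y) (t : Fin n) :
    S'.orderEmbOfFin hS' t = f (S.orderEmbOfFin hS t) := by
  have h := Finset.orderEmbOfFin_unique hS' (f := fun s => f (S.orderEmbOfFin hS s))
    (fun s => hmem _ (Finset.orderEmbOfFin_mem S hS s))
    (fun s s' hss' => hmono _ (Finset.orderEmbOfFin_mem S hS s) _
      (Finset.orderEmbOfFin_mem S hS s') ((S.orderEmbOfFin hS).strictMono hss'))
  exact (congrFun h t).symm

lemma swap_mono_val {x y : Fin k} (hik : i + 1 < k)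
    (hx : (x : ℕ) ≠ i + 1) (hy : (y : ℕ) ≠ i + 1) (hxy : x < y) :
    Equiv.swap (⟨i, by omega⟩ : Fin k) ⟨i+1, hik⟩ x < Equiv.swap ⟨i, by omega⟩ ⟨i+1, hik⟩ y := by
  rw [Fin.lt_def] at hxy ⊢
  rw [Equiv.swap_apply_def, Equiv.swap_apply_def]
  split_ifs <;> simp_all [Fin.ext_iff] <;> omega

lemma swap_mono_val' {x y : Fin k} (hik : i + 1 < k)
    (hx : (x : ℕ) ≠ i) (hy : (y : ℕ) ≠ i) (hxy : x < y) :
    Equiv.swap (⟨i, by omega⟩ : Fin k) ⟨i+1, hik⟩ x < Equiv.swap ⟨i, by omega⟩ ⟨i+1, hik⟩ y := by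
  rw [Fin.lt_def] at hxy ⊢
  rw [Equiv.swap_apply_def, Equiv.swap_apply_def]
  split_ifs <;> simp_all [Fin.ext_iff] <;> omega



set_option maxHeartbeats 1000000 in
lemma wt_plus_forward {p : ℕ} (hik : i + 1 < k)
    (hwi : w ⟨i, by omega⟩ = true) (hwi1 : w ⟨i+1, hik⟩ = false)
    (v : Fin k → Bool) (hv : ∀ j, v j = w (Equiv.swap ⟨i, by omega⟩ ⟨i+1, hik⟩ j))
    (hwp : (Finset.univ.filter fun j : Fin k => w j = true).card = p)
    (hvp : (Finset.univ.filter fun j : Fin k => v j = true).card = p)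
    (T : Fin (k+1) → Fin d → ℤ) (a : Fin p → ℕ) (h : HasWtPlus d k p w hwp T a) :
    HasWtPlus d k p v hvp (PhiT d k i hik T) a := by
  set f := Equiv.swap (⟨i, by omega⟩ : Fin k) ⟨i+1, hik⟩ with hf
  have hne : ∀ x : Fin (k+1), (x : ℕ) ≠ i + 1 → PhiT d k i hik T x = T x := fun x hx =>
    Function.update_of_ne (Fin.ne_of_val_ne hx) _ _
  have hupd : PhiT d k i hik T ⟨i+1, by omega⟩
      = phiMap d (T ⟨i, by omega⟩) (T ⟨i+2, by omega⟩) (T ⟨i+1, by omega⟩) :=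
    Function.update_self _ _ _
  have hmem : ∀ x ∈ Finset.univ.filter (fun j : Fin k => w j = true),
      f x ∈ Finset.univ.filter (fun j : Fin k => v j = true) := by
    intro x hx
    simp only [Finset.mem_filter, Finset.mem_univ, true_and] at hx ⊢
    rw [hv, hf, Equiv.swap_apply_self]
    exact hx
  have hmono : ∀ x ∈ Finset.univ.filter (fun j : Fin k => w j = true),
      ∀ y ∈ Finset.univ.filter (fun j : Fin k => w j = true), x < y → f x < f y := by
    intro x hx y hy hxy
    simp only [Finset.mem_filter, Finset.mem_univ, true_and] at hx hy
    apply swap_mono_val hik ?_ ?_ hxy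
    · intro hc
      have hxx : x = ⟨i+1, hik⟩ := Fin.ext hc
      rw [hxx, hwi1] at hx; exact absurd hx (by simp)
    · intro hc
      have hyy : y = ⟨i+1, hik⟩ := Fin.ext hc
      rw [hyy, hwi1] at hy; exact absurd hy (by simp)
  intro t
  have hemb := emb_comp hwp hvp f hmem hmono t
  have ht := h t
  simp only [Finset.coe_orderIsoOfFin_apply] at ht ⊢
  rw [hemb]
  set P := (Finset.univ.filter fun j : Fin k => w j = true).orderEmbOfFin hwp t with hPdef
  have hPmem : w P = true := by
    have := Finset.orderEmbOfFin_mem _ hwp t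
    simp only [Finset.mem_filter] at this
    exact this.2
  have hPexcl : (P : ℕ) ≠ i + 1 := by
    intro hc
    have hcc : P = ⟨i+1, hik⟩ := Fin.ext hc
    rw [hcc, hwi1] at hPmem; exact absurd hPmem (by simp)
  by_cases hP : (P : ℕ) = i
  · have hPP : P = ⟨i, by omega⟩ := Fin.ext hP
    have hfP : f P = (⟨i+1, hik⟩ : Fin k) := (congrArg f hPP).trans (Equiv.swap_apply_left _ _)
    rw [hfP]
    have e_s : PhiT d k i hik T (Fin.succ (⟨i+1, hik⟩ : Fin k)) = T ⟨i+2, by omega⟩ := hne _ (show ((i:ℕ)+2) ≠ i + 1 by omega)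
    have e_c : PhiT d k i hik T (Fin.castSucc (⟨i+1, hik⟩ : Fin k)) = phiMap d (T ⟨i, by omega⟩) (T ⟨i+2, by omega⟩) (T ⟨i+1, by omega⟩) := hupd
    have s1 : (∑ j, PhiT d k i hik T (Fin.castSucc (⟨i+1, hik⟩ : Fin k)) j)
        = ∑ j, phiMap d (T ⟨i, by omega⟩) (T ⟨i+2, by omega⟩) (T ⟨i+1, by omega⟩) j :=
      Finset.sum_congr rfl (fun j _ => congrFun e_c j)
    have s2 : (∑ j, PhiT d k i hik T (Fin.succ (⟨i+1, hik⟩ : Fin k)) j)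
        = ∑ j, T (⟨i+2, by omega⟩ : Fin (k+1)) j :=
      Finset.sum_congr rfl (fun j _ => congrFun e_s j)
    have s3 := sum_phi d (T ⟨i, by omega⟩) (T ⟨i+2, by omega⟩) (T ⟨i+1, by omega⟩)
    rw [hPP] at ht
    have s4 : (∑ j, T (Fin.succ (⟨i, by omega⟩ : Fin k)) j)
        = ∑ j, T (⟨i+1, by omega⟩ : Fin (k+1)) j :=
      Finset.sum_congr rfl (fun j _ => rfl)
    have s5 : (∑ j, T (Fin.castSucc (⟨i, by omega⟩ : Fin k)) j)
        = ∑ j, T (⟨i, by omega⟩ : Fin (k+1)) j :=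
      Finset.sum_congr rfl (fun j _ => rfl)
    linear_combination s2 - s1 - s3 + ht - s4 + s5
  · have hfP : f P = P := by
      rw [hf]
      apply Equiv.swap_apply_of_ne_of_ne
      · exact fun hc => (show (P : ℕ) ≠ i by omega) (by rw [hc])
      · exact fun hc => (show (P : ℕ) ≠ i + 1 by omega) (by rw [hc])
    rw [hfP]
    have e1 : PhiT d k i hik T (Fin.succ P) = T (Fin.succ P) :=
      hne _ (by simp only [Fin.val_succ]; omega)
    have e2 : PhiT d k i hik T (Fin.castSucc P) = T (Fin.castSucc P) :=
      hne _ (by simp only [Fin.coe_castSucc]; omega)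
    have s1n : (∑ j, PhiT d k i hik T (Fin.succ P) j) = ∑ j, T (Fin.succ P) j :=
      Finset.sum_congr rfl (fun j _ => congrFun e1 j)
    have s2n : (∑ j, PhiT d k i hik T (Fin.castSucc P) j) = ∑ j, T (Fin.castSucc P) j :=
      Finset.sum_congr rfl (fun j _ => congrFun e2 j)
    linear_combination s1n - s2n + ht

set_option maxHeartbeats 1000000 in
lemma wt_plus_backward {p : ℕ} (hik : i + 1 < k)
    (hwi : w ⟨i, by omega⟩ = true) (hwi1 : w ⟨i+1, hik⟩ = false)
    (v : Fin k → Bool) (hv : ∀ j, v j = w (Equiv.swap ⟨i, by omega⟩ ⟨i+1, hik⟩ j))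
    (hwp : (Finset.univ.filter fun j : Fin k => w j = true).card = p)
    (hvp : (Finset.univ.filter fun j : Fin k => v j = true).card = p)
    (T : Fin (k+1) → Fin d → ℤ) (a : Fin p → ℕ) (h : HasWtPlus d k p v hvp T a) :
    HasWtPlus d k p w hwp (PsiT d k i hik T) a := by
  set f := Equiv.swap (⟨i, by omega⟩ : Fin k) ⟨i+1, hik⟩ with hf
  have hne : ∀ x : Fin (k+1), (x : ℕ) ≠ i + 1 → PsiT d k i hik T x = T x := fun x hx =>
    Function.update_of_ne (Fin.ne_of_val_ne hx) _ _
  have hupd : PsiT d k i hik T ⟨i+1, by omega⟩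
      = psiMap d (T ⟨i, by omega⟩) (T ⟨i+2, by omega⟩) (T ⟨i+1, by omega⟩) :=
    Function.update_self _ _ _
  have hmem : ∀ x ∈ Finset.univ.filter (fun j : Fin k => v j = true),
      f x ∈ Finset.univ.filter (fun j : Fin k => w j = true) := by
    intro x hx
    simp only [Finset.mem_filter, Finset.mem_univ, true_and] at hx ⊢
    rw [← hv]
    exact hx
  have hmono : ∀ x ∈ Finset.univ.filter (fun j : Fin k => v j = true),
      ∀ y ∈ Finset.univ.filter (fun j : Fin k => v j = true), x < y → f x < f y := by
    intro x hx y hy hxy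
    simp only [Finset.mem_filter, Finset.mem_univ, true_and] at hx hy
    have hv0 : v ⟨i, by omega⟩ = false := by
      rw [hv, Equiv.swap_apply_left]; exact hwi1
    apply swap_mono_val' hik ?_ ?_ hxy
    · intro hc
      have hxx : x = ⟨i, by omega⟩ := Fin.ext hc
      rw [hxx, hv0] at hx; exact absurd hx (by simp)
    · intro hc
      have hyy : y = ⟨i, by omega⟩ := Fin.ext hc
      rw [hyy, hv0] at hy; exact absurd hy (by simp)
  intro t
  have hemb := emb_comp hvp hwp f hmem hmono t
  have ht := h t
  simp only [Finset.coe_orderIsoOfFin_apply] at ht ⊢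
  rw [hemb]
  set P := (Finset.univ.filter fun j : Fin k => v j = true).orderEmbOfFin hvp t with hPdef
  have hPmem : v P = true := by
    have := Finset.orderEmbOfFin_mem _ hvp t
    simp only [Finset.mem_filter] at this
    exact this.2
  have hPexcl : (P : ℕ) ≠ i := by
    intro hc
    have hcc : P = ⟨i, by omega⟩ := Fin.ext hc
    rw [hcc, hv, Equiv.swap_apply_left, hwi1] at hPmem; exact absurd hPmem (by simp)
  by_cases hP : (P : ℕ) = i + 1
  · have hPP : P = ⟨i+1, hik⟩ := Fin.ext hP
    have hfP : f P = (⟨i, by omega⟩ : Fin k) := (congrArg f hPP).trans (Equiv.swap_apply_right _ _)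
    rw [hfP]
    have e_s : PsiT d k i hik T (Fin.succ (⟨i, by omega⟩ : Fin k)) = psiMap d (T ⟨i, by omega⟩) (T ⟨i+2, by omega⟩) (T ⟨i+1, by omega⟩) := hupd
    have e_c : PsiT d k i hik T (Fin.castSucc (⟨i, by omega⟩ : Fin k)) = T ⟨i, by omega⟩ := hne _ (show ((i:ℕ)) ≠ i + 1 by omega)
    have s1 : (∑ j, PsiT d k i hik T (Fin.succ (⟨i, by omega⟩ : Fin k)) j)
        = ∑ j, psiMap d (T ⟨i, by omega⟩) (T ⟨i+2, by omega⟩) (T ⟨i+1, by omega⟩) j :=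
      Finset.sum_congr rfl (fun j _ => congrFun e_s j)
    have s2 : (∑ j, PsiT d k i hik T (Fin.castSucc (⟨i, by omega⟩ : Fin k)) j)
        = ∑ j, T (⟨i, by omega⟩ : Fin (k+1)) j :=
      Finset.sum_congr rfl (fun j _ => congrFun e_c j)
    have s3 := sum_psi d (T ⟨i, by omega⟩) (T ⟨i+2, by omega⟩) (T ⟨i+1, by omega⟩)
    rw [hPP] at ht
    have s4 : (∑ j, T (Fin.succ (⟨i+1, hik⟩ : Fin k)) j)
        = ∑ j, T (⟨i+2, by omega⟩ : Fin (k+1)) j :=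
      Finset.sum_congr rfl (fun j _ => rfl)
    have s5 : (∑ j, T (Fin.castSucc (⟨i+1, hik⟩ : Fin k)) j)
        = ∑ j, T (⟨i+1, by omega⟩ : Fin (k+1)) j :=
      Finset.sum_congr rfl (fun j _ => rfl)
    linear_combination s1 - s2 + s3 + ht - s4 + s5
  · have hfP : f P = P := by
      rw [hf]
      apply Equiv.swap_apply_of_ne_of_ne
      · exact fun hc => (show (P : ℕ) ≠ i by omega) (by rw [hc])
      · exact fun hc => (show (P : ℕ) ≠ i + 1 by omega) (by rw [hc])
    rw [hfP]
    have e1 : PsiT d k i hik T (Fin.succ P) = T (Fin.succ P) :=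
      hne _ (by simp only [Fin.val_succ]; omega)
    have e2 : PsiT d k i hik T (Fin.castSucc P) = T (Fin.castSucc P) :=
      hne _ (by simp only [Fin.coe_castSucc]; omega)
    have s1n : (∑ j, PsiT d k i hik T (Fin.succ P) j) = ∑ j, T (Fin.succ P) j :=
      Finset.sum_congr rfl (fun j _ => congrFun e1 j)
    have s2n : (∑ j, PsiT d k i hik T (Fin.castSucc P) j) = ∑ j, T (Fin.castSucc P) j :=
      Finset.sum_congr rfl (fun j _ => congrFun e2 j)
    linear_combination s1n - s2n + ht

set_option maxHeartbeats 1000000 in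
lemma wt_minus_forward {q : ℕ} (hik : i + 1 < k)
    (hwi : w ⟨i, by omega⟩ = true) (hwi1 : w ⟨i+1, hik⟩ = false)
    (v : Fin k → Bool) (hv : ∀ j, v j = w (Equiv.swap ⟨i, by omega⟩ ⟨i+1, hik⟩ j))
    (hwq : (Finset.univ.filter fun j : Fin k => w j = false).card = q)
    (hvq : (Finset.univ.filter fun j : Fin k => v j = false).card = q)
    (T : Fin (k+1) → Fin d → ℤ) (b : Fin q → ℕ) (h : HasWtMinus d k q w hwq T b) :
    HasWtMinus d k q v hvq (PhiT d k i hik T) b := by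
  set f := Equiv.swap (⟨i, by omega⟩ : Fin k) ⟨i+1, hik⟩ with hf
  have hne : ∀ x : Fin (k+1), (x : ℕ) ≠ i + 1 → PhiT d k i hik T x = T x := fun x hx =>
    Function.update_of_ne (Fin.ne_of_val_ne hx) _ _
  have hupd : PhiT d k i hik T ⟨i+1, by omega⟩
      = phiMap d (T ⟨i, by omega⟩) (T ⟨i+2, by omega⟩) (T ⟨i+1, by omega⟩) :=
    Function.update_self _ _ _
  have hmem : ∀ x ∈ Finset.univ.filter (fun j : Fin k => w j = false),
      f x ∈ Finset.univ.filter (fun j : Fin k => v j = false) := by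
    intro x hx
    simp only [Finset.mem_filter, Finset.mem_univ, true_and] at hx ⊢
    rw [hv, hf, Equiv.swap_apply_self]
    exact hx
  have hmono : ∀ x ∈ Finset.univ.filter (fun j : Fin k => w j = false),
      ∀ y ∈ Finset.univ.filter (fun j : Fin k => w j = false), x < y → f x < f y := by
    intro x hx y hy hxy
    simp only [Finset.mem_filter, Finset.mem_univ, true_and] at hx hy
    apply swap_mono_val' hik ?_ ?_ hxy
    · intro hc
      have hxx : x = ⟨i, by omega⟩ := Fin.ext hc
      rw [hxx, hwi] at hx; exact absurd hx (by simp)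
    · intro hc
      have hyy : y = ⟨i, by omega⟩ := Fin.ext hc
      rw [hyy, hwi] at hy; exact absurd hy (by simp)
  intro t
  have hemb := emb_comp hwq hvq f hmem hmono t.rev
  have ht := h t
  simp only [Finset.coe_orderIsoOfFin_apply] at ht ⊢
  rw [hemb]
  set P := (Finset.univ.filter fun j : Fin k => w j = false).orderEmbOfFin hwq t.rev with hPdef
  have hPmem : w P = false := by
    have := Finset.orderEmbOfFin_mem _ hwq t.rev
    simp only [Finset.mem_filter] at this
    exact this.2
  have hPexcl : (P : ℕ) ≠ i := by
    intro hc
    have hcc : P = ⟨i, by omega⟩ := Fin.ext hc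
    rw [hcc, hwi] at hPmem; exact absurd hPmem (by simp)
  by_cases hP : (P : ℕ) = i + 1
  · have hPP : P = ⟨i+1, hik⟩ := Fin.ext hP
    have hfP : f P = (⟨i, by omega⟩ : Fin k) := (congrArg f hPP).trans (Equiv.swap_apply_right _ _)
    rw [hfP]
    have e_s : PhiT d k i hik T (Fin.succ (⟨i, by omega⟩ : Fin k)) = phiMap d (T ⟨i, by omega⟩) (T ⟨i+2, by omega⟩) (T ⟨i+1, by omega⟩) := hupd
    have e_c : PhiT d k i hik T (Fin.castSucc (⟨i, by omega⟩ : Fin k)) = T ⟨i, by omega⟩ := hne _ (show ((i:ℕ)) ≠ i + 1 by omega)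
    have s1 : (∑ j, PhiT d k i hik T (Fin.succ (⟨i, by omega⟩ : Fin k)) j)
        = ∑ j, phiMap d (T ⟨i, by omega⟩) (T ⟨i+2, by omega⟩) (T ⟨i+1, by omega⟩) j :=
      Finset.sum_congr rfl (fun j _ => congrFun e_s j)
    have s2 : (∑ j, PhiT d k i hik T (Fin.castSucc (⟨i, by omega⟩ : Fin k)) j)
        = ∑ j, T (⟨i, by omega⟩ : Fin (k+1)) j :=
      Finset.sum_congr rfl (fun j _ => congrFun e_c j)
    have s3 := sum_phi d (T ⟨i, by omega⟩) (T ⟨i+2, by omega⟩) (T ⟨i+1, by omega⟩)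
    rw [hPP] at ht
    have s4 : (∑ j, T (Fin.succ (⟨i+1, hik⟩ : Fin k)) j)
        = ∑ j, T (⟨i+2, by omega⟩ : Fin (k+1)) j :=
      Finset.sum_congr rfl (fun j _ => rfl)
    have s5 : (∑ j, T (Fin.castSucc (⟨i+1, hik⟩ : Fin k)) j)
        = ∑ j, T (⟨i+1, by omega⟩ : Fin (k+1)) j :=
      Finset.sum_congr rfl (fun j _ => rfl)
    linear_combination s2 - s1 - s3 + ht - s5 + s4
  · have hfP : f P = P := by
      rw [hf]
      apply Equiv.swap_apply_of_ne_of_ne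
      · exact fun hc => (show (P : ℕ) ≠ i by omega) (by rw [hc])
      · exact fun hc => (show (P : ℕ) ≠ i + 1 by omega) (by rw [hc])
    rw [hfP]
    have e1 : PhiT d k i hik T (Fin.succ P) = T (Fin.succ P) :=
      hne _ (by simp only [Fin.val_succ]; omega)
    have e2 : PhiT d k i hik T (Fin.castSucc P) = T (Fin.castSucc P) :=
      hne _ (by simp only [Fin.coe_castSucc]; omega)
    have s1n : (∑ j, PhiT d k i hik T (Fin.succ P) j) = ∑ j, T (Fin.succ P) j :=
      Finset.sum_congr rfl (fun j _ => congrFun e1 j)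
    have s2n : (∑ j, PhiT d k i hik T (Fin.castSucc P) j) = ∑ j, T (Fin.castSucc P) j :=
      Finset.sum_congr rfl (fun j _ => congrFun e2 j)
    linear_combination s2n - s1n + ht

set_option maxHeartbeats 1000000 in
lemma wt_minus_backward {q : ℕ} (hik : i + 1 < k)
    (hwi : w ⟨i, by omega⟩ = true) (hwi1 : w ⟨i+1, hik⟩ = false)
    (v : Fin k → Bool) (hv : ∀ j, v j = w (Equiv.swap ⟨i, by omega⟩ ⟨i+1, hik⟩ j))
    (hwq : (Finset.univ.filter fun j : Fin k => w j = false).card = q)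
    (hvq : (Finset.univ.filter fun j : Fin k => v j = false).card = q)
    (T : Fin (k+1) → Fin d → ℤ) (b : Fin q → ℕ) (h : HasWtMinus d k q v hvq T b) :
    HasWtMinus d k q w hwq (PsiT d k i hik T) b := by
  set f := Equiv.swap (⟨i, by omega⟩ : Fin k) ⟨i+1, hik⟩ with hf
  have hne : ∀ x : Fin (k+1), (x : ℕ) ≠ i + 1 → PsiT d k i hik T x = T x := fun x hx =>
    Function.update_of_ne (Fin.ne_of_val_ne hx) _ _
  have hupd : PsiT d k i hik T ⟨i+1, by omega⟩
      = psiMap d (T ⟨i, by omega⟩) (T ⟨i+2, by omega⟩) (T ⟨i+1, by omega⟩) :=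
    Function.update_self _ _ _
  have hmem : ∀ x ∈ Finset.univ.filter (fun j : Fin k => v j = false),
      f x ∈ Finset.univ.filter (fun j : Fin k => w j = false) := by
    intro x hx
    simp only [Finset.mem_filter, Finset.mem_univ, true_and] at hx ⊢
    rw [← hv]
    exact hx
  have hmono : ∀ x ∈ Finset.univ.filter (fun j : Fin k => v j = false),
      ∀ y ∈ Finset.univ.filter (fun j : Fin k => v j = false), x < y → f x < f y := by
    intro x hx y hy hxy
    simp only [Finset.mem_filter, Finset.mem_univ, true_and] at hx hy
    have hv1 : v ⟨i+1, hik⟩ = true := by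
      rw [hv, Equiv.swap_apply_right]; exact hwi
    apply swap_mono_val hik ?_ ?_ hxy
    · intro hc
      have hxx : x = ⟨i+1, hik⟩ := Fin.ext hc
      rw [hxx, hv1] at hx; exact absurd hx (by simp)
    · intro hc
      have hyy : y = ⟨i+1, hik⟩ := Fin.ext hc
      rw [hyy, hv1] at hy; exact absurd hy (by simp)
  intro t
  have hemb := emb_comp hvq hwq f hmem hmono t.rev
  have ht := h t
  simp only [Finset.coe_orderIsoOfFin_apply] at ht ⊢
  rw [hemb]
  set P := (Finset.univ.filter fun j : Fin k => v j = false).orderEmbOfFin hvq t.rev with hPdef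
  have hPmem : v P = false := by
    have := Finset.orderEmbOfFin_mem _ hvq t.rev
    simp only [Finset.mem_filter] at this
    exact this.2
  have hPexcl : (P : ℕ) ≠ i + 1 := by
    intro hc
    have hcc : P = ⟨i+1, hik⟩ := Fin.ext hc
    rw [hcc, hv, Equiv.swap_apply_right, hwi] at hPmem; exact absurd hPmem (by simp)
  by_cases hP : (P : ℕ) = i
  · have hPP : P = ⟨i, by omega⟩ := Fin.ext hP
    have hfP : f P = (⟨i+1, hik⟩ : Fin k) := (congrArg f hPP).trans (Equiv.swap_apply_left _ _)
    rw [hfP]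
    have e_s : PsiT d k i hik T (Fin.succ (⟨i+1, hik⟩ : Fin k)) = T ⟨i+2, by omega⟩ := hne _ (show ((i:ℕ)+2) ≠ i + 1 by omega)
    have e_c : PsiT d k i hik T (Fin.castSucc (⟨i+1, hik⟩ : Fin k)) = psiMap d (T ⟨i, by omega⟩) (T ⟨i+2, by omega⟩) (T ⟨i+1, by omega⟩) := hupd
    have s1 : (∑ j, PsiT d k i hik T (Fin.castSucc (⟨i+1, hik⟩ : Fin k)) j)
        = ∑ j, psiMap d (T ⟨i, by omega⟩) (T ⟨i+2, by omega⟩) (T ⟨i+1, by omega⟩) j :=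
      Finset.sum_congr rfl (fun j _ => congrFun e_c j)
    have s2 : (∑ j, PsiT d k i hik T (Fin.succ (⟨i+1, hik⟩ : Fin k)) j)
        = ∑ j, T (⟨i+2, by omega⟩ : Fin (k+1)) j :=
      Finset.sum_congr rfl (fun j _ => congrFun e_s j)
    have s3 := sum_psi d (T ⟨i, by omega⟩) (T ⟨i+2, by omega⟩) (T ⟨i+1, by omega⟩)
    rw [hPP] at ht
    have s4 : (∑ j, T (Fin.succ (⟨i, by omega⟩ : Fin k)) j)
        = ∑ j, T (⟨i+1, by omega⟩ : Fin (k+1)) j :=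
      Finset.sum_congr rfl (fun j _ => rfl)
    have s5 : (∑ j, T (Fin.castSucc (⟨i, by omega⟩ : Fin k)) j)
        = ∑ j, T (⟨i, by omega⟩ : Fin (k+1)) j :=
      Finset.sum_congr rfl (fun j _ => rfl)
    linear_combination s1 - s2 + s3 + ht - s5 + s4
  · have hfP : f P = P := by
      rw [hf]
      apply Equiv.swap_apply_of_ne_of_ne
      · exact fun hc => (show (P : ℕ) ≠ i by omega) (by rw [hc])
      · exact fun hc => (show (P : ℕ) ≠ i + 1 by omega) (by rw [hc])
    rw [hfP]
    have e1 : PsiT d k i hik T (Fin.succ P) = T (Fin.succ P) :=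
      hne _ (by simp only [Fin.val_succ]; omega)
    have e2 : PsiT d k i hik T (Fin.castSucc P) = T (Fin.castSucc P) :=
      hne _ (by simp only [Fin.coe_castSucc]; omega)
    have s1n : (∑ j, PsiT d k i hik T (Fin.succ P) j) = ∑ j, T (Fin.succ P) j :=
      Finset.sum_congr rfl (fun j _ => congrFun e1 j)
    have s2n : (∑ j, PsiT d k i hik T (Fin.castSucc P) j) = ∑ j, T (Fin.castSucc P) j :=
      Finset.sum_congr rfl (fun j _ => congrFun e2 j)
    linear_combination s2n - s1n + ht

lemma count_swap {p q : ℕ} (hik : i + 1 < k)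
    (hwi : w ⟨i, by omega⟩ = true) (hwi1 : w ⟨i+1, hik⟩ = false)
    (v : Fin k → Bool) (hv : ∀ j, v j = w (Equiv.swap ⟨i, by omega⟩ ⟨i+1, hik⟩ j))
    (hwp : (Finset.univ.filter fun j : Fin k => w j = true).card = p)
    (hwq : (Finset.univ.filter fun j : Fin k => w j = false).card = q)
    (hvp : (Finset.univ.filter fun j : Fin k => v j = true).card = p)
    (hvq : (Finset.univ.filter fun j : Fin k => v j = false).card = q)
    (a : Fin p → ℕ) (b : Fin q → ℕ) :
    Nat.card {T : Fin (k + 1) → Fin d → ℤ //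
        IsSkewCylOsc d L k w μ lam T ∧ HasWtPlus d k p w hwp T a ∧
        HasWtMinus d k q w hwq T b} =
    Nat.card {T : Fin (k + 1) → Fin d → ℤ //
        IsSkewCylOsc d L k v μ lam T ∧ HasWtPlus d k p v hvp T a ∧
        HasWtMinus d k q v hvq T b} := by
  apply Nat.card_congr
  refine Equiv.subtypeEquiv
    ⟨PhiT d k i hik, PsiT d k i hik, PsiT_PhiT d k i hik, PhiT_PsiT d k i hik⟩ ?_
  intro T
  constructor
  · rintro ⟨h1, h2, h3⟩
    exact ⟨osc_forward hik hwi hwi1 v hv T h1,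
      wt_plus_forward hik hwi hwi1 v hv hwp hvp T a h2,
      wt_minus_forward hik hwi hwi1 v hv hwq hvq T b h3⟩
  · rintro ⟨h1, h2, h3⟩
    have g1 := osc_backward hik hwi hwi1 v hv (PhiT d k i hik T) h1
    have g2 := wt_plus_backward hik hwi hwi1 v hv hwp hvp (PhiT d k i hik T) a h2
    have g3 := wt_minus_backward hik hwi hwi1 v hv hwq hvq (PhiT d k i hik T) b h3
    rw [PsiT_PhiT] at g1 g2 g3
    exact ⟨g1, g2, g3⟩

lemma card_filter_perm (w : Fin k → Bool) (e : Equiv.Perm (Fin k)) (v : Fin k → Bool)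
    (hv : ∀ j, v j = w (e j)) (bb : Bool) :
    (Finset.univ.filter fun j => v j = bb).card
      = (Finset.univ.filter fun j => w j = bb).card := by
  apply Finset.card_equiv e
  intro j
  simp [hv j]


lemma measure_lt (hik : i + 1 < k)
    (hwi : w ⟨i, by omega⟩ = true) (hwi1 : w ⟨i+1, hik⟩ = false)
    (v : Fin k → Bool) (hv : ∀ j, v j = w (Equiv.swap ⟨i, by omega⟩ ⟨i+1, hik⟩ j)) :
    (∑ j ∈ Finset.univ.filter (fun j : Fin k => v j = false), (j : ℕ))
      < ∑ j ∈ Finset.univ.filter (fun j : Fin k => w j = false), (j : ℕ) := by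
  set f := Equiv.swap (⟨i, by omega⟩ : Fin k) ⟨i+1, hik⟩ with hf
  have himg : Finset.univ.filter (fun j : Fin k => v j = false)
      = (Finset.univ.filter (fun j : Fin k => w j = false)).image f := by
    ext x
    simp only [Finset.mem_filter, Finset.mem_image, Finset.mem_univ, true_and]
    constructor
    · intro hx
      refine ⟨f x, ?_, ?_⟩
      · rw [← hv x]; exact hx
      · exact Equiv.swap_apply_self _ _ _
    · rintro ⟨y, hy, rfl⟩
      rw [hv (f y)]
      have : f (f y) = y := Equiv.swap_apply_self _ _ _
      rw [this]
      exact hy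
  rw [himg, Finset.sum_image (fun x _ y _ hxy => f.injective hxy)]
  apply Finset.sum_lt_sum
  · intro y hy
    simp only [Finset.mem_filter, Finset.mem_univ, true_and] at hy
    have hy0 : y ≠ ⟨i, by omega⟩ := by
      intro hc; rw [hc, hwi] at hy; exact absurd hy (by simp)
    by_cases hy1 : y = ⟨i+1, hik⟩
    · have : f y = ⟨i, by omega⟩ := by rw [hy1, hf]; exact Equiv.swap_apply_right _ _
      rw [this, hy1]
      simp
    · have : f y = y := Equiv.swap_apply_of_ne_of_ne hy0 hy1
      rw [this]
  · refine ⟨⟨i+1, hik⟩, ?_, ?_⟩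
    · simp only [Finset.mem_filter, Finset.mem_univ, true_and]
      exact hwi1
    · have : f ⟨i+1, hik⟩ = ⟨i, by omega⟩ := Equiv.swap_apply_right _ _
      rw [this]
      simp

end Swap

/-- the canonical word: all `-` then all `+`. -/
def canonW (k q : ℕ) : Fin k → Bool := fun j => decide (q ≤ (j : ℕ))

lemma eq_canonical {k q : ℕ} (w : Fin k → Bool)
    (hwq : (Finset.univ.filter fun j : Fin k => w j = false).card = q)
    (hnd : ∀ (i : ℕ) (h : i + 1 < k), ¬(w ⟨i, by omega⟩ = true ∧ w ⟨i+1, h⟩ = false)) :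
    w = canonW k q := by
  have step : ∀ (n m : ℕ) (hm : m < k) (hmn : m + n < k),
      w ⟨m, hm⟩ = true → w ⟨m + n, hmn⟩ = true := by
    intro n
    induction n with
    | zero => intro m hm hmn hw; exact hw
    | succ n ih =>
      intro m hm hmn hw
      have h1 : w ⟨m + n, by omega⟩ = true := ih m hm (by omega) hw
      by_contra hf
      exact hnd (m + n) (by omega) ⟨h1, by
        have hf' : ¬ w ⟨m + n + 1, by omega⟩ = true := hf
        simpa using hf'⟩
  have hmono : ∀ x y : Fin k, x ≤ y → w x = true → w y = true := by
    intro x y hxy hx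
    have hxy' : (x : ℕ) ≤ (y : ℕ) := hxy
    have := step ((y : ℕ) - (x : ℕ)) (x : ℕ) x.2 (by omega)
      (by simp only [Fin.eta]; exact hx)
    have he : (⟨(x : ℕ) + ((y : ℕ) - (x : ℕ)), by omega⟩ : Fin k) = y := Fin.ext (by simp; omega)
    rwa [he] at this
  have hchar : ∀ j : Fin k, w j = false ↔ (j : ℕ) < q := by
    intro j
    constructor
    · intro hj
      have hsub : Finset.Iic j ⊆ Finset.univ.filter (fun x : Fin k => w x = false) := by
        intro x hx
        simp only [Finset.mem_Iic] at hx
        simp only [Finset.mem_filter, Finset.mem_univ, true_and]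
        by_contra hx'
        have hx'' : w x = true := by simpa using hx'
        have := hmono x j hx hx''
        rw [this] at hj; exact absurd hj (by simp)
      have hle := Finset.card_le_card hsub
      rw [Fin.card_Iic, hwq] at hle
      omega
    · intro hj
      by_contra hj'
      have hw' : w j = true := by simpa using hj'
      have hsub : Finset.univ.filter (fun x : Fin k => w x = false) ⊆ Finset.Iio j := by
        intro x hx
        simp only [Finset.mem_filter, Finset.mem_univ, true_and] at hx
        simp only [Finset.mem_Iio]
        by_contra hc
        push_neg at hc
        have := hmono j x hc hw'
        rw [this] at hx; exact absurd hx (by simp)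
      have hle := Finset.card_le_card hsub
      rw [Fin.card_Iio, hwq] at hle
      omega
  funext j
  by_cases hj : (j : ℕ) < q
  · rw [(hchar j).mpr hj]
    simp only [canonW]
    symm
    simp only [decide_eq_false_iff_not]
    omega
  · have : w j ≠ false := fun hc => hj ((hchar j).mp hc)
    have hw' : w j = true := by simpa using this
    rw [hw']
    simp only [canonW]
    symm
    simp only [decide_eq_true_eq]
    omega

lemma filter_true_add_false {k : ℕ} (w : Fin k → Bool) :
    (Finset.univ.filter fun j : Fin k => w j = true).card
      + (Finset.univ.filter fun j : Fin k => w j = false).card = k := by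
  classical
  have h := Finset.card_filter_add_card_filter_not
    (s := (Finset.univ : Finset (Fin k))) (p := fun j : Fin k => w j = true)
  simpa [Bool.not_eq_true, Finset.card_univ] using h

lemma card_filter_lt (k q : ℕ) (hqk : q ≤ k) :
    (Finset.univ.filter fun j : Fin k => (j : ℕ) < q).card = q := by
  rw [← Finset.card_range q]
  apply Finset.card_bij (fun (x : Fin k) _ => (x : ℕ))
  · intro x hx
    simp only [Finset.mem_filter, Finset.mem_univ, true_and] at hx
    simpa [Finset.mem_range] using hx
  · intro x _ y _ hxy
    exact Fin.ext hxy
  · intro y hy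
    simp only [Finset.mem_range] at hy
    exact ⟨⟨y, by omega⟩, by simp [hy], rfl⟩

lemma card_canon_false (k q : ℕ) (hqk : q ≤ k) :
    (Finset.univ.filter fun j : Fin k => canonW k q j = false).card = q := by
  have he : (Finset.univ.filter fun j : Fin k => canonW k q j = false)
      = Finset.univ.filter fun j : Fin k => (j : ℕ) < q := by
    apply Finset.filter_congr
    intro j _
    simp only [canonW, decide_eq_false_iff_not]
    constructor <;> (intro; omega)
  rw [he, card_filter_lt k q hqk]


lemma to_canonical (d L k p q : ℕ) (μ lam : Fin d → ℤ) (a : Fin p → ℕ) (b : Fin q → ℕ)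
    (hcanp : (Finset.univ.filter fun j : Fin k => canonW k q j = true).card = p)
    (hcanq : (Finset.univ.filter fun j : Fin k => canonW k q j = false).card = q) :
    ∀ (n : ℕ) (w : Fin k → Bool)
      (hwp : (Finset.univ.filter fun j : Fin k => w j = true).card = p)
      (hwq : (Finset.univ.filter fun j : Fin k => w j = false).card = q),
      (∑ j ∈ Finset.univ.filter (fun j : Fin k => w j = false), (j : ℕ)) ≤ n →
      Nat.card {T : Fin (k + 1) → Fin d → ℤ //
          IsSkewCylOsc d L k w μ lam T ∧ HasWtPlus d k p w hwp T a ∧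
          HasWtMinus d k q w hwq T b} =
      Nat.card {T : Fin (k + 1) → Fin d → ℤ //
          IsSkewCylOsc d L k (canonW k q) μ lam T ∧ HasWtPlus d k p (canonW k q) hcanp T a ∧
          HasWtMinus d k q (canonW k q) hcanq T b} := by
  intro n
  induction n with
  | zero =>
    intro w hwp hwq hm
    by_cases hdes : ∃ (i : ℕ) (h : i + 1 < k), w ⟨i, by omega⟩ = true ∧ w ⟨i+1, h⟩ = false
    · exfalso
      obtain ⟨i, hik, hwi, hwi1⟩ := hdes
      have hmem : (⟨i+1, hik⟩ : Fin k) ∈ Finset.univ.filter (fun j : Fin k => w j = false) := by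
        simp only [Finset.mem_filter, Finset.mem_univ, true_and]; exact hwi1
      have := Finset.single_le_sum (f := fun j : Fin k => (j : ℕ)) (fun _ _ => Nat.zero_le _) hmem
      simp only at this
      omega
    · push_neg at hdes
      have hw := eq_canonical w hwq (fun i h => by
        intro hc
        exact absurd hc.2 (hdes i h hc.1))
      subst hw
      rfl
  | succ n ih =>
    intro w hwp hwq hm
    by_cases hdes : ∃ (i : ℕ) (h : i + 1 < k), w ⟨i, by omega⟩ = true ∧ w ⟨i+1, h⟩ = false
    · obtain ⟨i, hik, hwi, hwi1⟩ := hdes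
      set v : Fin k → Bool := fun j => w (Equiv.swap ⟨i, by omega⟩ ⟨i+1, hik⟩ j) with hvdef
      have hv : ∀ j, v j = w (Equiv.swap ⟨i, by omega⟩ ⟨i+1, hik⟩ j) := fun j => rfl
      have hvp : (Finset.univ.filter fun j : Fin k => v j = true).card = p :=
        (card_filter_perm w _ v hv true).trans hwp
      have hvq : (Finset.univ.filter fun j : Fin k => v j = false).card = q :=
        (card_filter_perm w _ v hv false).trans hwq
      have hcnt := count_swap (d := d) (L := L) (μ := μ) (lam := lam)
        hik hwi hwi1 v hv hwp hwq hvp hvq a b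
      rw [hcnt]
      apply ih v hvp hvq
      have := measure_lt hik hwi hwi1 v hv
      omega
    · push_neg at hdes
      have hw := eq_canonical w hwq (fun i h => by
        intro hc
        exact absurd hc.2 (hdes i h hc.1))
      subst hw
      rfl

end DRSK

/-- Skew `d`-RSK invariance: for type sequences `w`, `v` with the same number of `+`'s
and `−`'s, the number of skew `d`-semistandard `w`-oscillating tableaux with given inner
shape, outer shape, weights and minimum cylindric width at most `L` equals the
corresponding number for `v`. -/
theorem skew_dRSK_count_independent_of_type_sequence
    (d L k p q : ℕ) (hd : 0 < d) (w v : Fin k → Bool)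
    (hwp : (Finset.univ.filter fun i : Fin k => w i = true).card = p)
    (hwq : (Finset.univ.filter fun i : Fin k => w i = false).card = q)
    (hvp : (Finset.univ.filter fun i : Fin k => v i = true).card = p)
    (hvq : (Finset.univ.filter fun i : Fin k => v i = false).card = q)
    (μ lam : Fin d → ℤ) (hμ : Antitone μ) (hlam : Antitone lam)
    (a : Fin p → ℕ) (b : Fin q → ℕ) :
    Nat.card {T : Fin (k + 1) → Fin d → ℤ //
        IsSkewCylOsc d L k w μ lam T ∧ HasWtPlus d k p w hwp T a ∧
        HasWtMinus d k q w hwq T b} =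
    Nat.card {T : Fin (k + 1) → Fin d → ℤ //
        IsSkewCylOsc d L k v μ lam T ∧ HasWtPlus d k p v hvp T a ∧
        HasWtMinus d k q v hvq T b} := by
  have hpq : p + q = k := by
    have h := DRSK.filter_true_add_false w
    rw [hwp, hwq] at h
    exact h
  have hqk : q ≤ k := by omega
  have hcanq := DRSK.card_canon_false k q hqk
  have hcanp : (Finset.univ.filter fun j : Fin k => DRSK.canonW k q j = true).card = p := by
    have h := DRSK.filter_true_add_false (DRSK.canonW k q)
    rw [hcanq] at h
    omega
  rw [DRSK.to_canonical d L k p q μ lam a b hcanp hcanq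
      (∑ j ∈ Finset.univ.filter (fun j : Fin k => w j = false), (j : ℕ)) w hwp hwq le_rfl,
    DRSK.to_canonical d L k p q μ lam a b hcanp hcanq
      (∑ j ∈ Finset.univ.filter (fun j : Fin k => v j = false), (j : ℕ)) v hvp hvq le_rfl]
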